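/- In the (2,n)-semigroup of full n-place functions on A₀ = A ∪ {c} (with extensions f⁰ sending undefined tuples to c), the map f ↦ f⁰ preserves each Mann composition: (f ∘ᵢ g)⁰ = f⁰ ∘ᵢ g⁰ for all partial n-place functions f, g on A, provided c is 'absorbing' in the sense that any tuple containing c is outside dom(f) (i.e. f⁰ of such a tuple equals c). -/

import Mathlib

/-- The type of partial `n`-place functions on `A`. -/
abbrev PFn (n : ℕ) (A : Type) := (Fin n → A) → Option A

/-- The `i`-th Mann composition `f ∘ᵢ g` of partial functions. -/
def mann {n : ℕ} {A : Type} (i : Fin n) (f g : PFn n A) : PFn n A :=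
  fun a => (g a).bind fun b => f (Function.update a i b)

/-- The `i`-th Mann composition of full (total) `n`-place functions on `B`. -/
def mannT {n : ℕ} {B : Type} (i : Fin n) (f g : (Fin n → B) → B) :
    (Fin n → B) → B :=
  fun a => f (Function.update a i (g a))

/-- The extension `f⁰` of a partial `n`-place function `f` on `A` to a full
`n`-place function on `A ∪ {c}`, modelled as `Option A` with `none` playing
the role of `c`.  Any tuple containing `c` is sent to `c`, so `c` is
absorbing. -/
def extend {n : ℕ} {A : Type} (f : PFn n A) : (Fin n → Option A) → Option A :=
  fun x => if h : ∀ i, (x i).isSome then f (fun i => (x i).get (h i)) else none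

/-- `(f ∘ᵢ g)⁰ = f⁰ ∘ᵢ g⁰`. -/
theorem extend_mann {n : ℕ} {A : Type} (i : Fin n) (f g : PFn n A) :
    extend (mann i f g) = mannT i (extend f) (extend g) := by
  funext x
  by_cases h : ∀ j, (x j).isSome
  · have hgx : extend g x = g (fun j => (x j).get (h j)) := dif_pos h
    set a : Fin n → A := fun j => (x j).get (h j) with ha
    cases hg : g a with
    | none =>
      simp only [mannT, hgx, hg]
      simp only [extend, mann, dif_pos h, ← ha, hg, Option.bind_none]
      have : ¬ ∀ j, ((Function.update x i (none : Option A)) j).isSome := by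
        intro hall
        have := hall i
        simp [Function.update_self] at this
      simp [this]
    | some b =>
      simp only [mannT, hgx, hg]
      simp only [extend, mann, dif_pos h, ← ha, hg, Option.bind_some]
      have hall : ∀ j, ((Function.update x i (some b)) j).isSome := by
        intro j
        by_cases hj : j = i
        · subst hj; simp
        · simp [Function.update_of_ne hj, h j]
      rw [dif_pos hall]
      congr 1
      funext j
      by_cases hj : j = i
      · subst hj; simp
      · simp [Function.update_of_ne hj, ha]
  · simp only [extend, mannT, dif_neg h]
    have : ¬ ∀ j, ((Function.update x i (none : Option A)) j).isSome := by
      intro hall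
      have := hall i
      simp at this
    simp [this]
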